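/- Let n ≥ 1 and let a ∈ ℝ^n be the vector with every coordinate equal to 1/√n (so ‖a‖ = 1). Consider the two objectives l_1(x) := 1 − exp(−‖x − a‖²) and l_2(x) := 1 − exp(−‖x + a‖²) on ℝ^n with the Euclidean norm, to be minimized. Then a point x ∈ ℝ^n is Pareto optimal for (l_1, l_2) if and only if x = t·a for some t ∈ [−1, 1]. -/

import Mathlib

open RealInnerProductSpace

/-- `x` is Pareto optimal for the objectives `f i` (to be minimized) if no `y`
weakly improves all objectives and strictly improves one. -/
def ParetoOptimal {E : Type*} {m : ℕ} (f : Fin m → E → ℝ) (x : E) : Prop :=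
  ¬ ∃ y : E, (∀ i, f i y ≤ f i x) ∧ ∃ j, f j y < f j x

private lemma exp_obj_le {s s' : ℝ} :
    1 - Real.exp (-s) ≤ 1 - Real.exp (-s') ↔ s ≤ s' := by
  constructor
  · intro h
    have : Real.exp (-s') ≤ Real.exp (-s) := by linarith
    have := Real.exp_le_exp.mp this
    linarith
  · intro h
    have : Real.exp (-s') ≤ Real.exp (-s) := Real.exp_le_exp.mpr (by linarith)
    linarith

private lemma exp_obj_lt {s s' : ℝ} :
    1 - Real.exp (-s) < 1 - Real.exp (-s') ↔ s < s' := by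
  constructor
  · intro h
    have : Real.exp (-s') < Real.exp (-s) := by linarith
    have := Real.exp_lt_exp.mp this
    linarith
  · intro h
    have : Real.exp (-s') < Real.exp (-s) := Real.exp_lt_exp.mpr (by linarith)
    linarith

set_option maxHeartbeats 1000000 in
/-- Ground-truth Pareto set for the synthetic task: with
`a = (1/√n, …, 1/√n)`, the Pareto set of `l₁(x) = 1 - exp(-‖x - a‖²)` and
`l₂(x) = 1 - exp(-‖x + a‖²)` is the segment `{t • a : t ∈ [-1, 1]}`. -/
theorem paretoOptimal_synthetic_iff_segment
    (n : ℕ) (hn : 1 ≤ n) (a x : EuclideanSpace ℝ (Fin n))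
    (ha : ∀ i, a i = 1 / Real.sqrt n) :
    ParetoOptimal
      ![fun y => 1 - Real.exp (-‖y - a‖ ^ 2),
        fun y => 1 - Real.exp (-‖y + a‖ ^ 2)] x ↔
      ∃ t ∈ Set.Icc (-1 : ℝ) 1, x = t • a := by
  have hn0 : (0:ℝ) < n := by exact_mod_cast hn
  have hnorm_a : ‖a‖ = 1 := by
    rw [EuclideanSpace.norm_eq]
    have hi : ∀ i : Fin n, ‖a i‖ ^ 2 = 1 / (n:ℝ) := by
      intro i
      rw [ha i, Real.norm_eq_abs, sq_abs, div_pow, one_pow, Real.sq_sqrt hn0.le]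
    rw [Finset.sum_congr rfl (fun i _ => hi i), Finset.sum_const, Finset.card_univ,
      Fintype.card_fin, nsmul_eq_mul, mul_one_div, div_self hn0.ne', Real.sqrt_one]
  have hia : ⟪a, a⟫ = 1 := by
    rw [real_inner_self_eq_norm_sq, hnorm_a]; ring
  -- norm of s•a - a and s•a + a
  have hsm : ∀ s : ℝ, ‖s • a - a‖ ^ 2 = (s - 1) ^ 2 := by
    intro s
    have h1 : s • a - a = (s - 1) • a := by rw [sub_smul, one_smul]
    rw [h1, norm_smul, Real.norm_eq_abs, hnorm_a, mul_one, sq_abs]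
  have hsp : ∀ s : ℝ, ‖s • a + a‖ ^ 2 = (s + 1) ^ 2 := by
    intro s
    have h1 : s • a + a = (s + 1) • a := by rw [add_smul, one_smul]
    rw [h1, norm_smul, Real.norm_eq_abs, hnorm_a, mul_one, sq_abs]
  have hxm : ‖x - a‖ ^ 2 = ‖x‖ ^ 2 - 2 * ⟪x, a⟫ + 1 := by
    rw [@norm_sub_sq_real, hnorm_a]; ring
  have hxp : ‖x + a‖ ^ 2 = ‖x‖ ^ 2 + 2 * ⟪x, a⟫ + 1 := by
    rw [@norm_add_sq_real, hnorm_a]; ring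
  constructor
  · intro hp
    by_contra hseg
    apply hp
    set t := ⟪x, a⟫ with ht
    by_cases hx : x = t • a
    · have htout : t < -1 ∨ 1 < t := by
        by_contra h
        push_neg at h
        exact hseg ⟨t, ⟨h.1, h.2⟩, hx⟩
      rcases htout with h | h
      · refine ⟨-a, ?_, 1, ?_⟩
        · intro i
          fin_cases i <;>
            simp only [Fin.mk_zero, Fin.mk_one, Matrix.cons_val_zero, Matrix.cons_val_one, Matrix.head_cons] <;>
            rw [exp_obj_le]
          · have : -a - a = (-2 : ℝ) • a := by module
            rw [this, norm_smul, Real.norm_eq_abs, hnorm_a]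
            have hx2 : ‖x - a‖ ^ 2 = (t - 1) ^ 2 := by rw [hx, hsm]
            rw [hx2]
            norm_num
            nlinarith
          · have : -a + a = (0 : EuclideanSpace ℝ (Fin n)) := by abel
            rw [this, norm_zero]
            simp only [ne_eq, pow_eq_zero_iff, OfNat.ofNat_ne_zero, not_false_eq_true, zero_pow]; exact sq_nonneg ‖x + a‖
        · simp only [Matrix.cons_val_one, Matrix.head_cons, Matrix.cons_val_zero]
          rw [exp_obj_lt]
          have : -a + a = (0 : EuclideanSpace ℝ (Fin n)) := by abel
          rw [this, norm_zero]
          have hx2 : ‖x + a‖ ^ 2 = (t + 1) ^ 2 := by rw [hx, hsp]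
          rw [hx2]
          nlinarith
      · refine ⟨a, ?_, 0, ?_⟩
        · intro i
          fin_cases i <;>
            simp only [Fin.mk_zero, Fin.mk_one, Matrix.cons_val_zero, Matrix.cons_val_one, Matrix.head_cons] <;>
            rw [exp_obj_le]
          · have : a - a = (0 : EuclideanSpace ℝ (Fin n)) := by abel
            rw [this, norm_zero]
            simp only [ne_eq, pow_eq_zero_iff, OfNat.ofNat_ne_zero, not_false_eq_true, zero_pow]; exact sq_nonneg ‖x - a‖
          · have : a + a = (2 : ℝ) • a := by module
            rw [this, norm_smul, Real.norm_eq_abs, hnorm_a]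
            have hx2 : ‖x + a‖ ^ 2 = (t + 1) ^ 2 := by rw [hx, hsp]
            rw [hx2]
            norm_num
            nlinarith
        · simp only [Matrix.cons_val_zero]
          rw [exp_obj_lt]
          have : a - a = (0 : EuclideanSpace ℝ (Fin n)) := by abel
          rw [this, norm_zero]
          have hx2 : ‖x - a‖ ^ 2 = (t - 1) ^ 2 := by rw [hx, hsm]
          rw [hx2]
          nlinarith
    · -- w ≠ 0 case: use y = t • a
      have hw : t ^ 2 < ‖x‖ ^ 2 := by
        have hne : x - t • a ≠ 0 := sub_ne_zero.mpr hx
        have hpos : 0 < ‖x - t • a‖ ^ 2 := pow_pos (norm_pos_iff.mpr hne) 2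
        have heq : ‖x - t • a‖ ^ 2 = ‖x‖ ^ 2 - t ^ 2 := by
          rw [@norm_sub_sq_real, norm_smul, Real.norm_eq_abs, hnorm_a,
            real_inner_smul_right, ← ht]
          ring_nf
          rw [sq_abs]
          ring
        rw [heq] at hpos
        linarith
      refine ⟨t • a, ?_, 0, ?_⟩
      · intro i
        fin_cases i <;>
          simp only [Fin.mk_zero, Fin.mk_one, Matrix.cons_val_zero, Matrix.cons_val_one, Matrix.head_cons] <;>
          rw [exp_obj_le]
        · rw [hsm, hxm]; nlinarith
        · rw [hsp, hxp]; nlinarith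
      · simp only [Matrix.cons_val_zero]
        rw [exp_obj_lt, hsm, hxm]
        nlinarith
  · rintro ⟨t, ⟨ht1, ht2⟩, rfl⟩
    rintro ⟨y, hall, j, hj⟩
    have h0 := hall 0
    have h1 := hall 1
    simp only [Matrix.cons_val_zero, Matrix.cons_val_one, Matrix.head_cons] at h0 h1
    rw [exp_obj_le] at h0 h1
    rw [hsm] at h0
    rw [hsp] at h1
    -- transform to first-power inequalities
    have hd1 : ‖y - a‖ ≤ 1 - t := by nlinarith [norm_nonneg (y - a)]
    have hd2 : ‖y + a‖ ≤ 1 + t := by nlinarith [norm_nonneg (y + a)]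
    have htri : (2:ℝ) ≤ ‖y + a‖ + ‖y - a‖ := by
      have h2a : (y + a) - (y - a) = (2:ℝ) • a := by
        rw [two_smul]; abel
      have := norm_sub_le (y + a) (y - a)
      rw [h2a, norm_smul, Real.norm_eq_abs, hnorm_a] at this
      norm_num at this
      linarith
    fin_cases j <;>
      simp only [Fin.mk_zero, Fin.mk_one, Matrix.cons_val_zero, Matrix.cons_val_one,
        Matrix.head_cons] at hj <;>
      rw [exp_obj_lt] at hj
    · rw [hsm] at hj
      have : ‖y - a‖ < 1 - t := by nlinarith [norm_nonneg (y - a)]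
      linarith
    · rw [hsp] at hj
      have : ‖y + a‖ < 1 + t := by nlinarith [norm_nonneg (y + a)]
      linarith
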